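/- For every s ∈ I with s ≠ 1, 2, the double derivation Tr(E_s) on the fusion algebra A^f equals the gauge element F_s of A^f: Tr(E_s)(a) = a e_s ⊗ e_s − e_s ⊗ e_s a for all a ∈ A^f. -/

import Mathlib

open TensorProduct

/-- A double bracket on a `k`-algebra `A` (Van den Bergh): a bilinear map
`A × A → A ⊗ A` which is cyclically antisymmetric and a derivation in its second
argument for the outer bimodule structure on `A ⊗ A`. -/
structure DoubleBracket (k A : Type*) [CommRing k] [Ring A] [Algebra k A] where
  br : A →ₗ[k] A →ₗ[k] A ⊗[k] A
  antisymm : ∀ a b : A, br a b = - (TensorProduct.comm k A A) (br b a)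
  deriv : ∀ a b c : A,
    br a (b * c) = br a b * ((1 : A) ⊗ₜ[k] c) + (b ⊗ₜ[k] (1 : A)) * br a c

section Core

variable (k : Type*) [CommRing k] (A : Type*) [Ring A] [Algebra k A]

/-- The cyclic permutation `x ⊗ y ⊗ z ↦ z ⊗ x ⊗ y` on the triple tensor product. -/
noncomputable def cyc3 : A ⊗[k] (A ⊗[k] A) ≃ₗ[k] A ⊗[k] (A ⊗[k] A) :=
  (TensorProduct.assoc k A A A).symm.trans (TensorProduct.comm k (A ⊗[k] A) A)

variable {k A}

/-- Apply a double bracket (as a bilinear map) to the first tensor factor,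
`x ⊗ y ↦ ⟪a, x⟫ ⊗ y`. -/
noncomputable def leftExtOf (br : A →ₗ[k] A →ₗ[k] A ⊗[k] A) (a : A) :
    A ⊗[k] A →ₗ[k] A ⊗[k] (A ⊗[k] A) :=
  (TensorProduct.assoc k A A A).toLinearMap.comp (TensorProduct.map (br a) LinearMap.id)

/-- The triple bracket associated to (the underlying bilinear map of) a double bracket:
`⟪a,b,c⟫ = ⟪a,⟪b,c⟫'⟫ ⊗ ⟪b,c⟫'' + τ(⟪b,⟪c,a⟫'⟫ ⊗ ⟪c,a⟫'') + τ²(⟪c,⟪a,b⟫'⟫ ⊗ ⟪a,b⟫'')`. -/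
noncomputable def tripleOf (br : A →ₗ[k] A →ₗ[k] A ⊗[k] A) (a b c : A) :
    A ⊗[k] (A ⊗[k] A) :=
  leftExtOf br a (br b c) + cyc3 k A (leftExtOf br b (br c a))
    + cyc3 k A (cyc3 k A (leftExtOf br c (br a b)))

/-- The triple bracket associated to a double bracket. -/
noncomputable def DoubleBracket.triple (D : DoubleBracket k A) (a b c : A) :
    A ⊗[k] (A ⊗[k] A) :=
  tripleOf D.br a b c

end Core

/-- A double bracket is quasi-Poisson over the ground field `k` (i.e. with respect to
the trivial idempotent decomposition `1 = 1`). -/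
def DoubleBracket.IsQuasiPoisson {k A : Type*} [Field k] [Ring A] [Algebra k A]
    (D : DoubleBracket k A) : Prop :=
  ∀ a b c : A, D.triple a b c = (4⁻¹ : k) •
    ((c * a) ⊗ₜ[k] (b ⊗ₜ[k] (1 : A)) - (c * a) ⊗ₜ[k] ((1 : A) ⊗ₜ[k] b)
      - c ⊗ₜ[k] ((a * b) ⊗ₜ[k] (1 : A)) + c ⊗ₜ[k] (a ⊗ₜ[k] b)
      - a ⊗ₜ[k] (b ⊗ₜ[k] c) + a ⊗ₜ[k] ((1 : A) ⊗ₜ[k] (b * c))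
      + (1 : A) ⊗ₜ[k] ((a * b) ⊗ₜ[k] c) - (1 : A) ⊗ₜ[k] (a ⊗ₜ[k] (b * c)))

section Fusion

variable (k : Type*) [Field k] (A : Type*) [Ring A] [Algebra k A]

/-- Relations presenting the extension algebra `Ā = A *_B B̄`, where `B̄ = Mat₂(k) ⊕ kμ`:
`Ā` is generated by the elements of `A` together with two new generators `e₁₂, e₂₁`
subject to `e₁₂e₂₁ = e₁`, `e₂₁e₁₂ = e₂`, `e₁e₁₂ = e₁₂ = e₁₂e₂`, `e₂e₂₁ = e₂₁ = e₂₁e₁`. -/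
inductive FusionRel (e1 e2 : A) :
    FreeAlgebra k (A ⊕ Fin 2) → FreeAlgebra k (A ⊕ Fin 2) → Prop
  | add (a b : A) : FusionRel e1 e2
      (FreeAlgebra.ι k (Sum.inl a) + FreeAlgebra.ι k (Sum.inl b))
      (FreeAlgebra.ι k (Sum.inl (a + b)))
  | smul (c : k) (a : A) : FusionRel e1 e2
      (c • FreeAlgebra.ι k (Sum.inl a)) (FreeAlgebra.ι k (Sum.inl (c • a)))
  | mul (a b : A) : FusionRel e1 e2
      (FreeAlgebra.ι k (Sum.inl a) * FreeAlgebra.ι k (Sum.inl b))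
      (FreeAlgebra.ι k (Sum.inl (a * b)))
  | one : FusionRel e1 e2 (FreeAlgebra.ι k (Sum.inl 1)) 1
  | mul1221 : FusionRel e1 e2
      (FreeAlgebra.ι k (Sum.inr 0) * FreeAlgebra.ι k (Sum.inr 1))
      (FreeAlgebra.ι k (Sum.inl e1))
  | mul2112 : FusionRel e1 e2
      (FreeAlgebra.ι k (Sum.inr 1) * FreeAlgebra.ι k (Sum.inr 0))
      (FreeAlgebra.ι k (Sum.inl e2))
  | e1mul12 : FusionRel e1 e2
      (FreeAlgebra.ι k (Sum.inl e1) * FreeAlgebra.ι k (Sum.inr 0))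
      (FreeAlgebra.ι k (Sum.inr 0))
  | mul12e2 : FusionRel e1 e2
      (FreeAlgebra.ι k (Sum.inr 0) * FreeAlgebra.ι k (Sum.inl e2))
      (FreeAlgebra.ι k (Sum.inr 0))
  | e2mul21 : FusionRel e1 e2
      (FreeAlgebra.ι k (Sum.inl e2) * FreeAlgebra.ι k (Sum.inr 1))
      (FreeAlgebra.ι k (Sum.inr 1))
  | mul21e1 : FusionRel e1 e2
      (FreeAlgebra.ι k (Sum.inr 1) * FreeAlgebra.ι k (Sum.inl e1))
      (FreeAlgebra.ι k (Sum.inr 1))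

/-- The extension algebra `Ā = A *_B B̄` of `A` along the pair of idempotents
`(e1, e2)`. -/
abbrev ExtAlg (e1 e2 : A) := RingQuot (FusionRel k A e1 e2)

variable (e1 e2 : A)

/-- The canonical map `A → Ā`. -/
noncomputable def extι : A →ₐ[k] ExtAlg k A e1 e2 where
  toFun a := RingQuot.mkAlgHom k (FusionRel k A e1 e2) (FreeAlgebra.ι k (Sum.inl a))
  map_one' := by
    simpa using RingQuot.mkAlgHom_rel k
      (FusionRel.one (k := k) (A := A) (e1 := e1) (e2 := e2))
  map_mul' a b := by
    have h := RingQuot.mkAlgHom_rel k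
      (FusionRel.mul (k := k) (A := A) (e1 := e1) (e2 := e2) a b)
    rw [map_mul] at h
    exact h.symm
  map_zero' := by
    have h := RingQuot.mkAlgHom_rel k
      (FusionRel.smul (k := k) (A := A) (e1 := e1) (e2 := e2) 0 1)
    rw [map_smul, zero_smul, zero_smul] at h
    exact h.symm
  map_add' a b := by
    have h := RingQuot.mkAlgHom_rel k
      (FusionRel.add (k := k) (A := A) (e1 := e1) (e2 := e2) a b)
    rw [map_add] at h
    exact h.symm
  commutes' c := by
    have h := RingQuot.mkAlgHom_rel k
      (FusionRel.smul (k := k) (A := A) (e1 := e1) (e2 := e2) c 1)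
    have h1 : (RingQuot.mkAlgHom k (FusionRel k A e1 e2))
        (FreeAlgebra.ι k (Sum.inl (1 : A))) = 1 := by
      simpa using RingQuot.mkAlgHom_rel k
        (FusionRel.one (k := k) (A := A) (e1 := e1) (e2 := e2))
    rw [map_smul, h1] at h
    rw [Algebra.algebraMap_eq_smul_one, Algebra.algebraMap_eq_smul_one]
    exact h.symm

/-- The matrix unit `e₁₂ ∈ Ā`. -/
noncomputable def ext12 : ExtAlg k A e1 e2 :=
  RingQuot.mkAlgHom k (FusionRel k A e1 e2) (FreeAlgebra.ι k (Sum.inr 0))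

/-- The matrix unit `e₂₁ ∈ Ā`. -/
noncomputable def ext21 : ExtAlg k A e1 e2 :=
  RingQuot.mkAlgHom k (FusionRel k A e1 e2) (FreeAlgebra.ι k (Sum.inr 1))

/-- The idempotent `ε = 1 − e₂ ∈ Ā`; the fusion algebra is the corner
`A^f = ε Ā ε`. -/
noncomputable def extEps : ExtAlg k A e1 e2 := 1 - extι k A e1 e2 e2

variable {k A e1 e2}

/-- Membership in the fusion algebra `A^f = ε Ā ε ⊆ Ā`. -/
def InCorner (x : ExtAlg k A e1 e2) : Prop :=
  extEps k A e1 e2 * x * extEps k A e1 e2 = x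

end Fusion

/-- The data of a double bracket on the corner algebra `A^f = ε Ā ε` (whose unit is
`ε`), recorded as a bilinear map on `Ā`: it is cyclically antisymmetric, satisfies the
derivation rule on corner elements, and takes corner values on corner elements. -/
structure CornerDoubleBracket (k R : Type*) [Field k] [Ring R] [Algebra k R]
    (ε : R) where
  br : R →ₗ[k] R →ₗ[k] R ⊗[k] R
  antisymm : ∀ a b : R, br a b = - (TensorProduct.comm k R R) (br b a)
  deriv : ∀ a b c : R, ε * a * ε = a → ε * b * ε = b → ε * c * ε = c →
    br a (b * c) = br a b * ((1 : R) ⊗ₜ[k] c) + (b ⊗ₜ[k] (1 : R)) * br a c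
  corner_val : ∀ a b : R, ε * a * ε = a → ε * b * ε = b →
    br a b = (ε ⊗ₜ[k] ε) * br a b * (ε ⊗ₜ[k] ε)

section GaugeTr

variable {k : Type*} [Field k] {A : Type*} [Ring A] [Algebra k A] {e1 e2 : A}

/-- The property of being (the extension to `Ā` of) the gauge element `E_s`: a double
derivation of `Ā` vanishing on `B̄` and given on `A` by
`E_s(a) = a e_s ⊗ e_s − e_s ⊗ e_s a`. -/
structure IsGaugeExt (es : A) (δ : ExtAlg k A e1 e2 →ₗ[k]
    ExtAlg k A e1 e2 ⊗[k] ExtAlg k A e1 e2) : Prop where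
  leib : ∀ x y : ExtAlg k A e1 e2,
    δ (x * y) = δ x * ((1 : ExtAlg k A e1 e2) ⊗ₜ[k] y)
      + (x ⊗ₜ[k] (1 : ExtAlg k A e1 e2)) * δ y
  on_A : ∀ a : A, δ (extι k A e1 e2 a) =
    (extι k A e1 e2 (a * es)) ⊗ₜ[k] (extι k A e1 e2 es)
      - (extι k A e1 e2 es) ⊗ₜ[k] (extι k A e1 e2 (es * a))
  on_e12 : δ (ext12 k A e1 e2) = 0
  on_e21 : δ (ext21 k A e1 e2) = 0

/-- The trace map on double derivations:
`Tr(δ)(a) = δ(a)'ε ⊗ εδ(a)'' + δ(a)'e₂₁ε ⊗ εe₁₂δ(a)''`. -/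
noncomputable def TrOf (δ : ExtAlg k A e1 e2 →ₗ[k]
    ExtAlg k A e1 e2 ⊗[k] ExtAlg k A e1 e2) :
    ExtAlg k A e1 e2 →ₗ[k] ExtAlg k A e1 e2 ⊗[k] ExtAlg k A e1 e2 :=
  (TensorProduct.map (LinearMap.mulRight k (extEps k A e1 e2))
      (LinearMap.mulLeft k (extEps k A e1 e2))).comp δ
    + (TensorProduct.map
        (LinearMap.mulRight k (ext21 k A e1 e2 * extEps k A e1 e2))
        (LinearMap.mulLeft k (extEps k A e1 e2 * ext12 k A e1 e2))).comp δ

end GaugeTr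


section AuxLemmas
open TensorProduct
variable (k : Type*) [Field k] (R : Type*) [Ring R] [Algebra k R]

lemma aux_smul_tmul (c : k) (S : R) :
    (c • S) ⊗ₜ[k] S - S ⊗ₜ[k] (c • S) = 0 := by
  rw [TensorProduct.smul_tmul, sub_self]

lemma aux_leib_mul (S x y : R) :
    ((x * S) ⊗ₜ[k] S - S ⊗ₜ[k] (S * x)) * ((1 : R) ⊗ₜ[k] y)
      + (x ⊗ₜ[k] (1 : R)) * ((y * S) ⊗ₜ[k] S - S ⊗ₜ[k] (S * y))
    = ((x * y) * S) ⊗ₜ[k] S - S ⊗ₜ[k] (S * (x * y)) := by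
  simp only [sub_mul, mul_sub, Algebra.TensorProduct.tmul_mul_tmul, one_mul, mul_one,
    mul_assoc]
  abel

lemma aux_leib_add (S x y : R) :
    ((x * S) ⊗ₜ[k] S - S ⊗ₜ[k] (S * x)) + ((y * S) ⊗ₜ[k] S - S ⊗ₜ[k] (S * y))
    = ((x + y) * S) ⊗ₜ[k] S - S ⊗ₜ[k] (S * (x + y)) := by
  simp only [add_mul, mul_add, TensorProduct.add_tmul, TensorProduct.tmul_add]
  abel

end AuxLemmas

/-- For `s ≠ 1, 2`, the double derivation `Tr(E_s)` on the fusion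
algebra `A^f = εĀε` equals the gauge element `F_s` of `A^f`:
`Tr(E_s)(a) = a e_s ⊗ e_s − e_s ⊗ e_s a` for all `a ∈ A^f`. -/
theorem statement9 (k : Type*) [Field k] [CharZero k]
    (A : Type*) [Ring A] [Algebra k A]
    (I : Type*) [Fintype I] [DecidableEq I] (e : I → A)
    (horth : ∀ s t : I, e s * e t = if s = t then e s else 0)
    (hsum : ∑ s : I, e s = 1)
    (i1 i2 : I) (h12 : i1 ≠ i2)
    (s : I) (hs1 : s ≠ i1) (hs2 : s ≠ i2)
    (Es : ExtAlg k A (e i1) (e i2) →ₗ[k]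
      ExtAlg k A (e i1) (e i2) ⊗[k] ExtAlg k A (e i1) (e i2))
    (hEs : IsGaugeExt (e s) Es) :
    ∀ a : ExtAlg k A (e i1) (e i2), InCorner a →
      TrOf Es a = (a * extι k A (e i1) (e i2) (e s)) ⊗ₜ[k] (extι k A (e i1) (e i2) (e s))
        - (extι k A (e i1) (e i2) (e s)) ⊗ₜ[k] (extι k A (e i1) (e i2) (e s) * a) := by
  intro a _ha
  set ι : A →ₐ[k] ExtAlg k A (e i1) (e i2) := extι k A (e i1) (e i2) with hιdef
  set S : ExtAlg k A (e i1) (e i2) := ι (e s) with hSdef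
  set E12 : ExtAlg k A (e i1) (e i2) := ext12 k A (e i1) (e i2) with hE12def
  set E21 : ExtAlg k A (e i1) (e i2) := ext21 k A (e i1) (e i2) with hE21def
  set ε : ExtAlg k A (e i1) (e i2) := extEps k A (e i1) (e i2) with hεdef
  -- idempotent orthogonality facts
  have h_se1 : e s * e i1 = 0 := by rw [horth, if_neg hs1]
  have h_e1s : e i1 * e s = 0 := by rw [horth, if_neg (fun h => hs1 h.symm)]
  have h_se2 : e s * e i2 = 0 := by rw [horth, if_neg hs2]
  have h_e2s : e i2 * e s = 0 := by rw [horth, if_neg (fun h => hs2 h.symm)]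
  -- relations in the extension algebra
  have hmkι : ∀ b : A, (RingQuot.mkAlgHom k (FusionRel k A (e i1) (e i2)))
      (FreeAlgebra.ι k (Sum.inl b)) = ι b := fun b => rfl
  have hr_e1_12 : ι (e i1) * E12 = E12 := by
    have h := RingQuot.mkAlgHom_rel k
      (FusionRel.e1mul12 (k := k) (A := A) (e1 := e i1) (e2 := e i2))
    rw [map_mul, hmkι] at h
    exact h
  have hr_12_e2 : E12 * ι (e i2) = E12 := by
    have h := RingQuot.mkAlgHom_rel k
      (FusionRel.mul12e2 (k := k) (A := A) (e1 := e i1) (e2 := e i2))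
    rw [map_mul, hmkι] at h
    exact h
  have hr_e2_21 : ι (e i2) * E21 = E21 := by
    have h := RingQuot.mkAlgHom_rel k
      (FusionRel.e2mul21 (k := k) (A := A) (e1 := e i1) (e2 := e i2))
    rw [map_mul, hmkι] at h
    exact h
  have hr_21_e1 : E21 * ι (e i1) = E21 := by
    have h := RingQuot.mkAlgHom_rel k
      (FusionRel.mul21e1 (k := k) (A := A) (e1 := e i1) (e2 := e i2))
    rw [map_mul, hmkι] at h
    exact h
  -- key vanishing / absorption facts for S
  have hS12 : S * E12 = 0 := by
    rw [← hr_e1_12, ← mul_assoc, hSdef, ← map_mul, h_se1, map_zero, zero_mul]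
  have h12S : E12 * S = 0 := by
    rw [← hr_12_e2, mul_assoc, hSdef, ← map_mul, h_e2s, map_zero, mul_zero]
  have hS21 : S * E21 = 0 := by
    rw [← hr_e2_21, ← mul_assoc, hSdef, ← map_mul, h_se2, map_zero, zero_mul]
  have h21S : E21 * S = 0 := by
    rw [← hr_21_e1, mul_assoc, hSdef, ← map_mul, h_e1s, map_zero, mul_zero]
  have hεeq : ε = 1 - ι (e i2) := rfl
  have hSε : S * ε = S := by
    rw [hεeq, mul_sub, mul_one, hSdef, ← map_mul, h_se2, map_zero, sub_zero]
  have hεS : ε * S = S := by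
    rw [hεeq, sub_mul, one_mul, hSdef, ← map_mul, h_e2s, map_zero, sub_zero]
  -- Es kills 1
  have hEs1 : Es 1 = 0 := by
    have h := hEs.leib 1 1
    rw [one_mul, ← Algebra.TensorProduct.one_def, mul_one, one_mul] at h
    calc Es 1 = (Es 1 + Es 1) - Es 1 := by abel
      _ = 0 := by rw [← h, sub_self]
  -- main formula: Es is the gauge double derivation on all of Ā
  have hmain : ∀ x : ExtAlg k A (e i1) (e i2),
      Es x = (x * S) ⊗ₜ[k] S - S ⊗ₜ[k] (S * x) := by
    intro x
    obtain ⟨z, rfl⟩ := RingQuot.mkAlgHom_surjective k (FusionRel k A (e i1) (e i2)) x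
    induction z using FreeAlgebra.induction with
    | grade0 c =>
      rw [AlgHom.commutes, Algebra.algebraMap_eq_smul_one, map_smul, hEs1, smul_zero,
        smul_mul_assoc, one_mul, mul_smul_comm, mul_one]
      exact (aux_smul_tmul k _ c S).symm
    | grade1 g =>
      rcases g with b | j
      · have : (RingQuot.mkAlgHom k (FusionRel k A (e i1) (e i2)))
            (FreeAlgebra.ι k (Sum.inl b)) = ι b := rfl
        rw [this]
        have h := hEs.on_A b
        rw [map_mul, map_mul] at h
        exact h
      · have hj : j = 0 ∨ j = 1 := by revert j; decide
        rcases hj with rfl | rfl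
        · have h0 : (RingQuot.mkAlgHom k (FusionRel k A (e i1) (e i2)))
              (FreeAlgebra.ι k (Sum.inr 0)) = E12 := rfl
          rw [h0, h12S, hS12, TensorProduct.zero_tmul, TensorProduct.tmul_zero]
          exact hEs.on_e12.trans (sub_self (0 : ExtAlg k A (e i1) (e i2) ⊗[k] ExtAlg k A (e i1) (e i2))).symm
        · have h1 : (RingQuot.mkAlgHom k (FusionRel k A (e i1) (e i2)))
              (FreeAlgebra.ι k (Sum.inr 1)) = E21 := rfl
          rw [h1, h21S, hS21, TensorProduct.zero_tmul, TensorProduct.tmul_zero]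
          exact hEs.on_e21.trans (sub_self (0 : ExtAlg k A (e i1) (e i2) ⊗[k] ExtAlg k A (e i1) (e i2))).symm
    | mul z w hz hw =>
      rw [map_mul, hEs.leib, hz, hw, mul_assoc,
        ← mul_assoc ((RingQuot.mkAlgHom k (FusionRel k A (e i1) (e i2))) z)]
      exact aux_leib_mul k _ S _ _
    | add z w hz hw =>
      rw [map_add, map_add, hz, hw]
      exact aux_leib_add k _ S _ _
  -- auxiliary absorption lemmas in right-associated form
  have L1 : (a * S) * ε = a * S := by rw [mul_assoc, hSε]
  have L4 : ε * (S * a) = S * a := by rw [← mul_assoc, hεS]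
  have L5 : S * (E21 * ε) = 0 := by rw [← mul_assoc, hS21, zero_mul]
  have L6 : (a * S) * (E21 * ε) = 0 := by rw [mul_assoc, L5, mul_zero]
  have L7 : (ε * E12) * S = 0 := by rw [mul_assoc, h12S, mul_zero]
  -- finish
  rw [show TrOf Es a = (TensorProduct.map (LinearMap.mulRight k ε)
      (LinearMap.mulLeft k ε)) (Es a)
    + (TensorProduct.map (LinearMap.mulRight k (E21 * ε))
      (LinearMap.mulLeft k (ε * E12))) (Es a) from rfl, hmain a]
  rw [map_sub, map_sub]
  simp only [TensorProduct.map_tmul, LinearMap.mulRight_apply, LinearMap.mulLeft_apply]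
  rw [L1, hεS, L4, hSε, L6, L5, TensorProduct.zero_tmul, TensorProduct.zero_tmul,
    sub_self, add_zero]
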